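/- arXiv:math/0212006 — 11 statements merged into one kernel-verified Lean document; each statement's English description precedes it below -/
import Mathlib

section
/- Let X₁ and X₂ be real-valued random variables on a probability space with finite second moments, and set Y := min(X₁,X₂) and Z := max(X₁,X₂). Then Cov(Y,Z) ≥ Cov(X₁,X₂). -/
open MeasureTheory ProbabilityTheory

/-- For real random variables `X₁, X₂` with finite second moments, with
`Y := min(X₁,X₂)` and `Z := max(X₁,X₂)`, one has `Cov(Y,Z) ≥ Cov(X₁,X₂)`,
where `Cov(U,V) = E[UV] - E[U]E[V]`. -/
theorem cov_min_max_ge_cov {Ω : Type*} [MeasureSpace Ω]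
    [IsProbabilityMeasure (ℙ : Measure Ω)]
    (X₁ X₂ : Ω → ℝ) (hX₁ : MemLp X₁ 2) (hX₂ : MemLp X₂ 2)
    (Y Z : Ω → ℝ) (hY : Y = fun ω => min (X₁ ω) (X₂ ω))
    (hZ : Z = fun ω => max (X₁ ω) (X₂ ω)) :
    (∫ ω, Y ω * Z ω) - (∫ ω, Y ω) * (∫ ω, Z ω) ≥
      (∫ ω, X₁ ω * X₂ ω) - (∫ ω, X₁ ω) * (∫ ω, X₂ ω) := by
  have hYm : MemLp Y 2 := by
    rw [hY]; exact hX₁.inf hX₂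
  have hZm : MemLp Z 2 := by
    rw [hZ]; exact hX₁.sup hX₂
  have one_le_two : (1 : ENNReal) ≤ 2 := by norm_num
  have iX₁ : Integrable X₁ := hX₁.integrable one_le_two
  have iX₂ : Integrable X₂ := hX₂.integrable one_le_two
  have iY : Integrable Y := hYm.integrable one_le_two
  have iZ : Integrable Z := hZm.integrable one_le_two
  -- products are equal pointwise
  have hprod : (∫ ω, Y ω * Z ω) = ∫ ω, X₁ ω * X₂ ω := by
    congr 1; funext ω; rw [hY, hZ]; exact min_mul_max _ _
  -- sums of means are equal
  have hsum : (∫ ω, Y ω) + (∫ ω, Z ω) = (∫ ω, X₁ ω) + (∫ ω, X₂ ω) := by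
    rw [← integral_add iY iZ, ← integral_add iX₁ iX₂]
    congr 1; funext ω; rw [hY, hZ]; exact min_add_max _ _
  -- E[Z] - E[Y] = E|X₁ - X₂| ≥ |E[X₁] - E[X₂]|
  have hdiff : (∫ ω, X₁ ω) - (∫ ω, X₂ ω) ≤ (∫ ω, Z ω) - (∫ ω, Y ω) ∧
      (∫ ω, X₂ ω) - (∫ ω, X₁ ω) ≤ (∫ ω, Z ω) - (∫ ω, Y ω) := by
    have h1 : (∫ ω, Z ω) - (∫ ω, Y ω) = ∫ ω, |X₁ ω - X₂ ω| := by
      rw [← integral_sub iZ iY]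
      congr 1; funext ω; rw [hY, hZ]
      rw [max_sub_min_eq_abs, abs_sub_comm]
    have h2 : |(∫ ω, X₁ ω) - (∫ ω, X₂ ω)| ≤ ∫ ω, |X₁ ω - X₂ ω| := by
      rw [← integral_sub iX₁ iX₂]
      calc |∫ ω, (X₁ ω - X₂ ω)| = ‖∫ ω, (X₁ ω - X₂ ω)‖ := (Real.norm_eq_abs _).symm
        _ ≤ ∫ ω, ‖X₁ ω - X₂ ω‖ := norm_integral_le_integral_norm _
        _ = ∫ ω, |X₁ ω - X₂ ω| := by simp [Real.norm_eq_abs]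
    rw [h1]
    constructor
    · exact le_trans (le_abs_self _) h2
    · exact le_trans (by rw [abs_sub_comm]; exact le_abs_self _) h2
  rw [hprod]
  obtain ⟨h1, h2⟩ := hdiff
  have h3 : ((∫ ω, X₁ ω) - (∫ ω, X₂ ω))^2 ≤ ((∫ ω, Z ω) - (∫ ω, Y ω))^2 :=
    sq_le_sq' (by linarith) h1
  have h4 : ((∫ ω, Y ω) + (∫ ω, Z ω))^2 = ((∫ ω, X₁ ω) + (∫ ω, X₂ ω))^2 := by
    rw [hsum]
  nlinarith [h3, h4]
end

section
/- Let X₁ and X₂ be real-valued random variables on a probability space with finite second moments, and set Y := min(X₁,X₂) and Z := max(X₁,X₂). Then Cov(Y,Z) = Cov(X₁,X₂) if and only if X₁ ≥ X₂ almost surely or X₂ ≥ X₁ almost surely. -/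
open MeasureTheory ProbabilityTheory

/-- For real random variables `X₁, X₂` with finite second moments, with
`Y := min(X₁,X₂)` and `Z := max(X₁,X₂)`, one has `Cov(Y,Z) = Cov(X₁,X₂)` iff
`X₁ ≥ X₂` a.s. or `X₂ ≥ X₁` a.s. -/
theorem cov_min_max_eq_cov_iff {Ω : Type*} [MeasureSpace Ω]
    [IsProbabilityMeasure (ℙ : Measure Ω)]
    (X₁ X₂ : Ω → ℝ) (hX₁ : MemLp X₁ 2) (hX₂ : MemLp X₂ 2)
    (Y Z : Ω → ℝ) (hY : Y = fun ω => min (X₁ ω) (X₂ ω))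
    (hZ : Z = fun ω => max (X₁ ω) (X₂ ω)) :
    (∫ ω, Y ω * Z ω) - (∫ ω, Y ω) * (∫ ω, Z ω) =
      (∫ ω, X₁ ω * X₂ ω) - (∫ ω, X₁ ω) * (∫ ω, X₂ ω) ↔
    (∀ᵐ ω, X₂ ω ≤ X₁ ω) ∨ (∀ᵐ ω, X₁ ω ≤ X₂ ω) := by
  subst hY hZ
  have hi1 : Integrable X₁ := hX₁.integrable one_le_two
  have hi2 : Integrable X₂ := hX₂.integrable one_le_two
  have hYm : MemLp (fun ω => min (X₁ ω) (X₂ ω)) 2 := hX₁.inf hX₂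
  have hZm : MemLp (fun ω => max (X₁ ω) (X₂ ω)) 2 := hX₁.sup hX₂
  have hiY : Integrable (fun ω => min (X₁ ω) (X₂ ω)) := hYm.integrable one_le_two
  have hiZ : Integrable (fun ω => max (X₁ ω) (X₂ ω)) := hZm.integrable one_le_two
  have hprod : (∫ ω, min (X₁ ω) (X₂ ω) * max (X₁ ω) (X₂ ω)) = ∫ ω, X₁ ω * X₂ ω := by
    refine integral_congr_ae (Filter.Eventually.of_forall fun ω => ?_)
    exact min_mul_max _ _
  have hsum : (∫ ω, min (X₁ ω) (X₂ ω)) + (∫ ω, max (X₁ ω) (X₂ ω))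
      = (∫ ω, X₁ ω) + (∫ ω, X₂ ω) := by
    rw [← integral_add hiY hiZ, ← integral_add hi1 hi2]
    refine integral_congr_ae (Filter.Eventually.of_forall fun ω => ?_)
    exact min_add_max _ _
  have key : ∀ (f g : Ω → ℝ), Integrable f → Integrable g → (∀ ω, f ω ≤ g ω) →
      ((∫ ω, f ω) = ∫ ω, g ω ↔ ∀ᵐ ω, f ω = g ω) := by
    intro f g hf hg hle
    have h0 : (∫ ω, (g ω - f ω)) = (∫ ω, g ω) - ∫ ω, f ω := integral_sub hg hf
    constructor
    · intro h
      have hz : (∫ ω, (g ω - f ω)) = 0 := by rw [h0, h]; ring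
      have := (integral_eq_zero_iff_of_nonneg
        (f := fun ω => g ω - f ω) (fun ω => sub_nonneg.2 (hle ω)) (hg.sub hf)).1 hz
      filter_upwards [this] with ω hω
      simp only [Pi.zero_apply] at hω; linarith
    · intro h
      refine integral_congr_ae ?_
      filter_upwards [h] with ω hω using hω
  set m := ∫ ω, min (X₁ ω) (X₂ ω) with hm
  set a := ∫ ω, X₁ ω with ha
  set b := ∫ ω, X₂ ω with hb
  have hM : (∫ ω, max (X₁ ω) (X₂ ω)) = a + b - m := by linarith
  rw [hprod, hM]
  have hma : m = a ↔ ∀ᵐ ω, X₁ ω ≤ X₂ ω := by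
    rw [hm, ha, key _ X₁ hiY hi1 (fun ω => min_le_left _ _)]
    constructor
    · intro h; filter_upwards [h] with ω hω; exact min_eq_left_iff.1 hω
    · intro h; filter_upwards [h] with ω hω; exact min_eq_left hω
  have hmb : m = b ↔ ∀ᵐ ω, X₂ ω ≤ X₁ ω := by
    rw [hm, hb, key _ X₂ hiY hi2 (fun ω => min_le_right _ _)]
    constructor
    · intro h; filter_upwards [h] with ω hω; exact min_eq_right_iff.1 hω
    · intro h; filter_upwards [h] with ω hω; exact min_eq_right hω
  constructor
  · intro h
    have : (a - m) * (b - m) = 0 := by linear_combination h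
    rcases mul_eq_zero.1 this with h' | h'
    · exact Or.inr (hma.1 (by linarith))
    · exact Or.inl (hmb.1 (by linarith))
  · rintro (h | h)
    · rw [hmb.2 h]; ring
    · rw [hma.2 h]; ring
end

section
/- Let X₁ and X₂ be real-valued random variables on a probability space with finite second moments, and set Y := min(X₁,X₂) and Z := max(X₁,X₂). Then Var(Y) + Var(Z) ≤ Var(X₁) + Var(X₂). -/
open MeasureTheory ProbabilityTheory

/-- For real random variables `X₁, X₂` with finite second moments, with
`Y := min(X₁,X₂)` and `Z := max(X₁,X₂)`,
`Var(Y) + Var(Z) ≤ Var(X₁) + Var(X₂)`. -/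
theorem variance_min_add_variance_max_le {Ω : Type*} [MeasureSpace Ω]
    [IsProbabilityMeasure (ℙ : Measure Ω)]
    (X₁ X₂ : Ω → ℝ) (hX₁ : MemLp X₁ 2) (hX₂ : MemLp X₂ 2)
    (Y Z : Ω → ℝ) (hY : Y = fun ω => min (X₁ ω) (X₂ ω))
    (hZ : Z = fun ω => max (X₁ ω) (X₂ ω)) :
    variance Y ℙ + variance Z ℙ ≤ variance X₁ ℙ + variance X₂ ℙ := by
  have hYm : MemLp Y 2 := by rw [hY]; exact hX₁.inf hX₂
  have hZm : MemLp Z 2 := by rw [hZ]; exact hX₁.sup hX₂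
  have one_le_two : (1 : ENNReal) ≤ 2 := by norm_num
  have iX₁ : Integrable X₁ ℙ := hX₁.integrable one_le_two
  have iX₂ : Integrable X₂ ℙ := hX₂.integrable one_le_two
  have iY : Integrable Y ℙ := hYm.integrable one_le_two
  have iZ : Integrable Z ℙ := hZm.integrable one_le_two
  -- sum of squares integrals equal
  have hsq : (∫ ω, Y ω ^ 2) + (∫ ω, Z ω ^ 2) = (∫ ω, X₁ ω ^ 2) + (∫ ω, X₂ ω ^ 2) := by
    rw [← integral_add hYm.integrable_sq hZm.integrable_sq,
        ← integral_add hX₁.integrable_sq hX₂.integrable_sq]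
    apply integral_congr_ae
    filter_upwards with ω
    rw [hY, hZ]
    rcases le_total (X₁ ω) (X₂ ω) with h | h <;> simp [min_eq_left, min_eq_right, max_eq_left,
      max_eq_right, h] <;> ring
  have hsum : (∫ ω, Y ω) + (∫ ω, Z ω) = (∫ ω, X₁ ω) + (∫ ω, X₂ ω) := by
    rw [← integral_add iY iZ, ← integral_add iX₁ iX₂]
    apply integral_congr_ae
    filter_upwards with ω
    rw [hY, hZ]
    rcases le_total (X₁ ω) (X₂ ω) with h | h <;>
      simp [min_eq_left, min_eq_right, max_eq_left, max_eq_right, h] <;> ring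
  have hY1 : (∫ ω, Y ω) ≤ ∫ ω, X₁ ω := by
    apply integral_mono iY iX₁
    intro ω; rw [hY]; exact min_le_left _ _
  have hY2 : (∫ ω, Y ω) ≤ ∫ ω, X₂ ω := by
    apply integral_mono iY iX₂
    intro ω; rw [hY]; exact min_le_right _ _
  have gen : ∀ a b c d : ℝ, a + b = c + d → a ≤ c → a ≤ d → c ^ 2 + d ^ 2 ≤ a ^ 2 + b ^ 2 := by
    intro a b c d h1 h2 h3
    have hb : b = c + d - a := by linarith
    subst hb
    nlinarith [mul_nonneg (sub_nonneg.2 h2) (sub_nonneg.2 h3)]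
  have key : (∫ ω, X₁ ω) ^ 2 + (∫ ω, X₂ ω) ^ 2 ≤ (∫ ω, Y ω) ^ 2 + (∫ ω, Z ω) ^ 2 :=
    gen _ _ _ _ hsum hY1 hY2
  rw [variance_eq_sub hYm, variance_eq_sub hZm, variance_eq_sub hX₁, variance_eq_sub hX₂]
  have e1 : ∫ ω, (Y ^ 2) ω = ∫ ω, Y ω ^ 2 := rfl
  have e2 : ∫ ω, (Z ^ 2) ω = ∫ ω, Z ω ^ 2 := rfl
  have e3 : ∫ ω, (X₁ ^ 2) ω = ∫ ω, X₁ ω ^ 2 := rfl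
  have e4 : ∫ ω, (X₂ ^ 2) ω = ∫ ω, X₂ ω ^ 2 := rfl
  simp only [e1, e2, e3, e4] at *
  linarith
end

section
/- Let X₁ and X₂ be real-valued random variables on a probability space with finite second moments, and set Y := min(X₁,X₂) and Z := max(X₁,X₂). Then Var(Y) + Var(Z) = Var(X₁) + Var(X₂) if and only if X₁ ≥ X₂ almost surely or X₂ ≥ X₁ almost surely. -/
open MeasureTheory ProbabilityTheory

/-- For real random variables `X₁, X₂` with finite second moments, with
`Y := min(X₁,X₂)` and `Z := max(X₁,X₂)`,
`Var(Y) + Var(Z) = Var(X₁) + Var(X₂)` iff `X₁ ≥ X₂` a.s. or `X₂ ≥ X₁` a.s. -/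
theorem variance_min_add_variance_max_eq_iff {Ω : Type*} [MeasureSpace Ω]
    [IsProbabilityMeasure (ℙ : Measure Ω)]
    (X₁ X₂ : Ω → ℝ) (hX₁ : MemLp X₁ 2) (hX₂ : MemLp X₂ 2)
    (Y Z : Ω → ℝ) (hY : Y = fun ω => min (X₁ ω) (X₂ ω))
    (hZ : Z = fun ω => max (X₁ ω) (X₂ ω)) :
    variance Y ℙ + variance Z ℙ = variance X₁ ℙ + variance X₂ ℙ ↔
      (∀ᵐ ω, X₂ ω ≤ X₁ ω) ∨ (∀ᵐ ω, X₁ ω ≤ X₂ ω) := by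
  subst hY hZ
  have hYm : MemLp (fun ω => min (X₁ ω) (X₂ ω)) 2 := hX₁.inf hX₂
  have hZm : MemLp (fun ω => max (X₁ ω) (X₂ ω)) 2 := hX₁.sup hX₂
  set g : Ω → ℝ := fun ω => max (X₂ ω - X₁ ω) 0 with hg
  set h : Ω → ℝ := fun ω => max (X₁ ω - X₂ ω) 0 with hh
  have hgZ : ∀ ω, max (X₁ ω) (X₂ ω) = X₁ ω + g ω := by
    intro ω; rcases le_total (X₁ ω) (X₂ ω) with hle | hle <;>
      simp [hg, max_eq_left, max_eq_right, hle, sub_nonneg.2 hle] <;> linarith [max_eq_left hle]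
  have hhZ : ∀ ω, max (X₁ ω) (X₂ ω) = X₂ ω + h ω := by
    intro ω; rcases le_total (X₁ ω) (X₂ ω) with hle | hle <;>
      simp [hh, max_eq_left, max_eq_right, hle, sub_nonneg.2 hle] <;> linarith
  have hgY : ∀ ω, min (X₁ ω) (X₂ ω) = X₂ ω - g ω := by
    intro ω; rcases le_total (X₁ ω) (X₂ ω) with hle | hle <;>
      simp [hg, min_eq_left, min_eq_right, hle, sub_nonneg.2 hle] <;> linarith
  have hhY : ∀ ω, min (X₁ ω) (X₂ ω) = X₁ ω - h ω := by
    intro ω; rcases le_total (X₁ ω) (X₂ ω) with hle | hle <;>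
      simp [hh, min_eq_left, min_eq_right, hle, sub_nonneg.2 hle] <;> linarith
  have hX₁i : Integrable X₁ := hX₁.integrable one_le_two
  have hX₂i : Integrable X₂ := hX₂.integrable one_le_two
  have hZi : Integrable (fun ω => max (X₁ ω) (X₂ ω)) := hZm.integrable one_le_two
  have hgi : Integrable g := by
    have : g = (fun ω => max (X₁ ω) (X₂ ω)) - X₁ := by
      funext ω; simp [hgZ ω]
    rw [this]; exact hZi.sub hX₁i
  have hhi : Integrable h := by
    have : h = (fun ω => max (X₁ ω) (X₂ ω)) - X₂ := by
      funext ω; simp [hhZ ω]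
    rw [this]; exact hZi.sub hX₂i
  -- integrals
  set a := ∫ ω, X₁ ω with ha
  set b := ∫ ω, X₂ ω with hb
  set t := ∫ ω, g ω with ht
  set u := ∫ ω, h ω with hu
  have hintZ : ∫ ω, max (X₁ ω) (X₂ ω) = a + t := by
    rw [ha, ht, ← integral_add hX₁i hgi]; congr 1; funext ω; exact hgZ ω
  have hintY : ∫ ω, min (X₁ ω) (X₂ ω) = a - u := by
    rw [ha, hu, ← integral_sub hX₁i hhi]; congr 1; funext ω; exact hhY ω
  have hintZ' : b + u = a + t := by
    rw [← hintZ, hb, hu, ← integral_add hX₂i hhi]; congr 1; funext ω; exact (hhZ ω).symm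
  have ht0 : 0 ≤ t := integral_nonneg fun ω => le_max_right _ _
  have hu0 : 0 ≤ u := integral_nonneg fun ω => le_max_right _ _
  -- sum of second moments equal
  have hsq : (∫ ω, min (X₁ ω) (X₂ ω) ^ 2) + (∫ ω, max (X₁ ω) (X₂ ω) ^ 2)
      = (∫ ω, X₁ ω ^ 2) + ∫ ω, X₂ ω ^ 2 := by
    rw [← integral_add hYm.integrable_sq hZm.integrable_sq,
        ← integral_add hX₁.integrable_sq hX₂.integrable_sq]
    congr 1; funext ω
    rcases le_total (X₁ ω) (X₂ ω) with hle | hle <;>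
      simp [min_eq_left, min_eq_right, max_eq_left, max_eq_right, hle] <;> ring
  have hvar : variance (fun ω => min (X₁ ω) (X₂ ω)) ℙ + variance (fun ω => max (X₁ ω) (X₂ ω)) ℙ
      - (variance X₁ ℙ + variance X₂ ℙ) = -(2 * u * t) := by
    rw [variance_eq_sub hYm, variance_eq_sub hZm, variance_eq_sub hX₁, variance_eq_sub hX₂]
    simp only [Pi.pow_apply]
    rw [hintY, hintZ]
    have ha' : (∫ x, X₁ x) = a := rfl
    have hb' : (∫ x, X₂ x) = b := rfl
    rw [ha', hb']
    linear_combination hsq + (b + a + t - u) * hintZ' 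
  constructor
  · intro heq
    have hut : 2 * u * t = 0 := by linarith [hvar]
    have : u = 0 ∨ t = 0 := by
      rcases mul_eq_zero.1 hut with h' | h'
      · left; rcases mul_eq_zero.1 h' with h'' | h'' <;> [linarith; exact h'']
      · right; exact h'
    rcases this with h0 | h0
    · right
      have := (integral_eq_zero_iff_of_nonneg (fun ω => le_max_right _ _) hhi).1 h0
      filter_upwards [this] with ω hω
      have : max (X₁ ω - X₂ ω) 0 = 0 := hω
      have := le_max_left (X₁ ω - X₂ ω) 0
      linarith [this.trans_eq ‹max (X₁ ω - X₂ ω) 0 = 0›]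
    · left
      have := (integral_eq_zero_iff_of_nonneg (fun ω => le_max_right _ _) hgi).1 h0
      filter_upwards [this] with ω hω
      have h1 : max (X₂ ω - X₁ ω) 0 = 0 := hω
      linarith [(le_max_left (X₂ ω - X₁ ω) 0).trans_eq h1]
  · intro hle
    have hut : u = 0 ∨ t = 0 := by
      rcases hle with hle | hle
      · right
        refine (integral_eq_zero_iff_of_nonneg (fun ω => le_max_right _ _) hgi).2 ?_
        filter_upwards [hle] with ω hω
        show g ω = (0 : Ω → ℝ) ω
        simp [hg, max_eq_right (sub_nonpos.2 hω)]
      · left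
        refine (integral_eq_zero_iff_of_nonneg (fun ω => le_max_right _ _) hhi).2 ?_
        filter_upwards [hle] with ω hω
        show h ω = (0 : Ω → ℝ) ω
        simp [hh, max_eq_right (sub_nonpos.2 hω)]
    rcases hut with h0 | h0 <;> [rw [h0] at hvar; rw [h0] at hvar] <;> simp at hvar <;> linarith
end

section
/- Let X₁ and X₂ be real-valued random variables on a probability space with finite second moments, and set Y := min(X₁,X₂) and Z := max(X₁,X₂). If Var(Y) = Var(X₁) + Var(X₂), then Var(Z) = 0, so Z is almost surely constant. -/
open MeasureTheory ProbabilityTheory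

/-- For real random variables `X₁, X₂` with finite second moments, with
`Y := min(X₁,X₂)` and `Z := max(X₁,X₂)`, if `Var(Y) = Var(X₁) + Var(X₂)`,
then `Var(Z) = 0` and `Z` is a.s. constant. -/
theorem variance_max_eq_zero_of_variance_min_eq_sum {Ω : Type*} [MeasureSpace Ω]
    [IsProbabilityMeasure (ℙ : Measure Ω)]
    (X₁ X₂ : Ω → ℝ) (hX₁ : MemLp X₁ 2) (hX₂ : MemLp X₂ 2)
    (Y Z : Ω → ℝ) (hY : Y = fun ω => min (X₁ ω) (X₂ ω))
    (hZ : Z = fun ω => max (X₁ ω) (X₂ ω))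
    (h : variance Y ℙ = variance X₁ ℙ + variance X₂ ℙ) :
    variance Z ℙ = 0 ∧ ∃ c : ℝ, ∀ᵐ ω, Z ω = c := by
  have hYm : MemLp Y 2 := by
    have := hX₁.inf hX₂
    have e : X₁ ⊓ X₂ = Y := by ext ω; simp [hY]
    rwa [e] at this
  have hZm : MemLp Z 2 := by
    have := hX₁.sup hX₂
    have e : X₁ ⊔ X₂ = Z := by ext ω; simp [hZ]
    rwa [e] at this
  have hi1 : Integrable X₁ ℙ := hX₁.integrable one_le_two
  have hi2 : Integrable X₂ ℙ := hX₂.integrable one_le_two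
  have hiY : Integrable Y ℙ := hYm.integrable one_le_two
  have hiZ : Integrable Z ℙ := hZm.integrable one_le_two
  have hs1 : Integrable (fun ω => X₁ ω ^ 2) ℙ := by simpa using hX₁.integrable_sq
  have hs2 : Integrable (fun ω => X₂ ω ^ 2) ℙ := by simpa using hX₂.integrable_sq
  have hsY : Integrable (fun ω => Y ω ^ 2) ℙ := by simpa using hYm.integrable_sq
  have hsZ : Integrable (fun ω => Z ω ^ 2) ℙ := by simpa using hZm.integrable_sq
  have hsum : (∫ ω, Y ω) + (∫ ω, Z ω) = (∫ ω, X₁ ω) + (∫ ω, X₂ ω) := by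
    rw [← integral_add hiY hiZ, ← integral_add hi1 hi2]
    congr 1
    ext ω
    simp only [hY, hZ]
    rcases le_total (X₁ ω) (X₂ ω) with h' | h' <;>
      simp [min_def, max_def, h'] <;> ring
  have hsq : (∫ ω, Y ω ^ 2) + (∫ ω, Z ω ^ 2) = (∫ ω, X₁ ω ^ 2) + (∫ ω, X₂ ω ^ 2) := by
    rw [← integral_add hsY hsZ, ← integral_add hs1 hs2]
    congr 1
    ext ω
    simp only [hY, hZ]
    rcases le_total (X₁ ω) (X₂ ω) with h' | h' <;>
      simp [min_def, max_def, h'] <;> ring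
  have hva : (∫ ω, X₁ ω) ≤ ∫ ω, Z ω := by
    apply integral_mono hi1 hiZ
    intro ω; simp [hZ, le_max_left]
  have hvb : (∫ ω, X₂ ω) ≤ ∫ ω, Z ω := by
    apply integral_mono hi2 hiZ
    intro ω; simp [hZ, le_max_right]
  have hd1 := variance_eq_sub hX₁
  have hd2 := variance_eq_sub hX₂
  have hdY := variance_eq_sub hYm
  have hdZ := variance_eq_sub hZm
  simp only [Pi.pow_apply] at hd1 hd2 hdY hdZ
  have hVZ : variance Z ℙ = 0 := by
    have hle : variance Z ℙ ≤ 0 := by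
      rw [hdZ]
      rw [hdY, hd1, hd2] at h
      have hu2 : (∫ ω, Y ω) ^ 2 = ((∫ ω, X₁ ω) + (∫ ω, X₂ ω) - ∫ ω, Z ω) ^ 2 := by
        have e : (∫ ω, Y ω) = (∫ ω, X₁ ω) + (∫ ω, X₂ ω) - ∫ ω, Z ω := by linarith
        rw [e]
      nlinarith [hsq, hu2, mul_nonneg (sub_nonneg.2 hva) (sub_nonneg.2 hvb)]
    exact le_antisymm hle (variance_nonneg Z ℙ)
  refine ⟨hVZ, ∫ ω, Z ω, ?_⟩
  have hev : evariance Z ℙ = 0 := by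
    rw [← hZm.ofReal_variance_eq, hVZ, ENNReal.ofReal_zero]
  have := (evariance_eq_zero_iff (hZm.aestronglyMeasurable.aemeasurable)).mp hev
  filter_upwards [this] with ω hω
  exact hω
end

section
/- Let X₁ and X₂ be independent real-valued random variables on a probability space with finite second moments, and set Y := min(X₁,X₂) and Z := max(X₁,X₂). Then Cov(Y,Z) ≥ 0, i.e. Y and Z are positively correlated. -/
open MeasureTheory ProbabilityTheory

/-- For independent real random variables `X₁, X₂` with finite second moments,
with `Y := min(X₁,X₂)` and `Z := max(X₁,X₂)`, one has `Cov(Y,Z) ≥ 0`. -/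
theorem cov_min_max_nonneg_of_indep {Ω : Type*} [MeasureSpace Ω]
    [IsProbabilityMeasure (ℙ : Measure Ω)]
    (X₁ X₂ : Ω → ℝ) (hX₁ : MemLp X₁ 2) (hX₂ : MemLp X₂ 2)
    (hind : IndepFun X₁ X₂ ℙ)
    (Y Z : Ω → ℝ) (hY : Y = fun ω => min (X₁ ω) (X₂ ω))
    (hZ : Z = fun ω => max (X₁ ω) (X₂ ω)) :
    0 ≤ (∫ ω, Y ω * Z ω) - (∫ ω, Y ω) * (∫ ω, Z ω) := by
  have hi1 : Integrable X₁ ℙ := hX₁.integrable one_le_two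
  have hi2 : Integrable X₂ ℙ := hX₂.integrable one_le_two
  have hiY : Integrable Y ℙ := by
    rw [hY]; exact hi1.inf hi2
  have hiZ : Integrable Z ℙ := by
    rw [hZ]; exact hi1.sup hi2
  have hYZ : (fun ω => Y ω * Z ω) = fun ω => X₁ ω * X₂ ω := by
    funext ω; rw [hY, hZ]; simp [min_mul_max]
  have hEYZ : (∫ ω, Y ω * Z ω) = (∫ ω, X₁ ω) * (∫ ω, X₂ ω) := by
    rw [hYZ]; exact hind.integral_fun_mul_eq_mul_integral hi1.1 hi2.1
  have hsum : (fun ω => Z ω) = fun ω => X₁ ω + X₂ ω - Y ω := by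
    funext ω; rw [hY, hZ]; rcases le_total (X₁ ω) (X₂ ω) with h | h <;>
      simp [min_eq_left, max_eq_right, min_eq_right, max_eq_left, h]
  have hEZ : (∫ ω, Z ω) = (∫ ω, X₁ ω) + (∫ ω, X₂ ω) - (∫ ω, Y ω) := by
    have h12 : Integrable (fun ω => X₁ ω + X₂ ω) ℙ := hi1.add hi2
    rw [hsum, integral_sub h12 hiY, integral_add hi1 hi2]
  have hY1 : (∫ ω, Y ω) ≤ ∫ ω, X₁ ω := by
    refine integral_mono hiY hi1 fun ω => ?_
    rw [hY]; exact min_le_left _ _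
  have hY2 : (∫ ω, Y ω) ≤ ∫ ω, X₂ ω := by
    refine integral_mono hiY hi2 fun ω => ?_
    rw [hY]; exact min_le_right _ _
  rw [hEYZ, hEZ]
  nlinarith [mul_nonneg (sub_nonneg.2 hY1) (sub_nonneg.2 hY2)]
end

section
/- Let X₁ and X₂ be real-valued random variables on a probability space with finite second moments such that Cov(X₁,X₂) ≥ 0, and set Y := min(X₁,X₂) and Z := max(X₁,X₂). Then Cov(Y,Z) ≥ 0. -/
open MeasureTheory ProbabilityTheory

/-- For real random variables `X₁, X₂` with finite second moments and
`Cov(X₁,X₂) ≥ 0`, with `Y := min(X₁,X₂)` and `Z := max(X₁,X₂)`, one has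
`Cov(Y,Z) ≥ 0`. -/
theorem cov_min_max_nonneg {Ω : Type*} [MeasureSpace Ω]
    [IsProbabilityMeasure (ℙ : Measure Ω)]
    (X₁ X₂ : Ω → ℝ) (hX₁ : MemLp X₁ 2) (hX₂ : MemLp X₂ 2)
    (hcov : 0 ≤ (∫ ω, X₁ ω * X₂ ω) - (∫ ω, X₁ ω) * (∫ ω, X₂ ω))
    (Y Z : Ω → ℝ) (hY : Y = fun ω => min (X₁ ω) (X₂ ω))
    (hZ : Z = fun ω => max (X₁ ω) (X₂ ω)) :
    0 ≤ (∫ ω, Y ω * Z ω) - (∫ ω, Y ω) * (∫ ω, Z ω) := by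
  subst hY hZ
  have hi1 : Integrable X₁ := hX₁.integrable one_le_two
  have hi2 : Integrable X₂ := hX₂.integrable one_le_two
  have hiY : Integrable (fun ω => min (X₁ ω) (X₂ ω)) := hi1.inf hi2
  have hiZ : Integrable (fun ω => max (X₁ ω) (X₂ ω)) := hi1.sup hi2
  have hprod : (∫ ω, min (X₁ ω) (X₂ ω) * max (X₁ ω) (X₂ ω)) = ∫ ω, X₁ ω * X₂ ω := by
    congr 1; funext ω; exact min_mul_max _ _
  have hm1 : (∫ ω, min (X₁ ω) (X₂ ω)) ≤ ∫ ω, X₁ ω :=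
    integral_mono hiY hi1 fun ω => min_le_left _ _
  have hm2 : (∫ ω, min (X₁ ω) (X₂ ω)) ≤ ∫ ω, X₂ ω :=
    integral_mono hiY hi2 fun ω => min_le_right _ _
  have hsum : (∫ ω, min (X₁ ω) (X₂ ω)) + (∫ ω, max (X₁ ω) (X₂ ω))
      = (∫ ω, X₁ ω) + (∫ ω, X₂ ω) := by
    rw [← integral_add hiY hiZ, ← integral_add hi1 hi2]
    congr 1; funext ω; simp [min_add_max]
  simp only [hprod]
  set P := ∫ ω, X₁ ω * X₂ ω
  set a := ∫ ω, X₁ ω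
  set b := ∫ ω, X₂ ω
  set m := ∫ ω, min (X₁ ω) (X₂ ω) with hm
  set M := ∫ ω, max (X₁ ω) (X₂ ω) with hM
  have hM' : m * M = m * (a + b) - m * m := by
    have : M = a + b - m := by linarith
    rw [this]; ring
  nlinarith [hcov, hM', mul_nonneg (sub_nonneg.2 hm1) (sub_nonneg.2 hm2)]
end

section
/- Let X, X₁ and X₂ be real-valued random variables on a probability space with finite second moments, and define the truncated random variable X(X₁,X₂) := min(X₂, max(X, X₁)). Then Var(X(X₁,X₂)) ≤ Var(X) + Var(X₁) + Var(X₂). -/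
open MeasureTheory ProbabilityTheory

lemma max_sq_le (u v w : ℝ) :
    (max u (max v w)) ^ 2 ≤ u ^ 2 + v ^ 2 + w ^ 2 := by
  rcases max_cases u (max v w) with ⟨h, _⟩ | ⟨h, _⟩
  · rw [h]; nlinarith
  · rw [h]
    rcases max_cases v w with ⟨h', _⟩ | ⟨h', _⟩ <;> rw [h'] <;> nlinarith

/-- For real random variables `X, X₁, X₂` with finite second moments, the
truncated random variable `min(X₂, max(X, X₁))` satisfies
`Var(min(X₂, max(X, X₁))) ≤ Var(X) + Var(X₁) + Var(X₂)`. -/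
theorem variance_truncation_le {Ω : Type*} [MeasureSpace Ω]
    [IsProbabilityMeasure (ℙ : Measure Ω)]
    (X X₁ X₂ : Ω → ℝ) (hX : MemLp X 2) (hX₁ : MemLp X₁ 2) (hX₂ : MemLp X₂ 2) :
    variance (fun ω => min (X₂ ω) (max (X ω) (X₁ ω))) ℙ ≤
      variance X ℙ + variance X₁ ℙ + variance X₂ ℙ := by
  set T : Ω → ℝ := fun ω => min (X₂ ω) (max (X ω) (X₁ ω)) with hTdef
  have hT : MemLp T 2 := hX₂.inf (hX.sup hX₁)
  set a := ∫ ω, X ω with ha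
  set b := ∫ ω, X₁ ω with hb
  set c := ∫ ω, X₂ ω with hc
  set m := min c (max a b) with hm
  -- pointwise bound
  have key : ∀ ω, (T ω - m) ^ 2 ≤ (X ω - a) ^ 2 + (X₁ ω - b) ^ 2 + (X₂ ω - c) ^ 2 := by
    intro ω
    have h1 : |T ω - m| ≤ max |X₂ ω - c| (max |X ω - a| |X₁ ω - b|) :=
      (abs_min_sub_min_le_max _ _ _ _).trans
        (max_le_max le_rfl (abs_max_sub_max_le_max _ _ _ _))
    calc (T ω - m) ^ 2 = |T ω - m| ^ 2 := (sq_abs _).symm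
      _ ≤ (max |X₂ ω - c| (max |X ω - a| |X₁ ω - b|)) ^ 2 := by
          exact pow_le_pow_left₀ (abs_nonneg _) h1 2
      _ ≤ |X₂ ω - c| ^ 2 + |X ω - a| ^ 2 + |X₁ ω - b| ^ 2 :=
          max_sq_le _ _ _
      _ = (X ω - a) ^ 2 + (X₁ ω - b) ^ 2 + (X₂ ω - c) ^ 2 := by
          simp only [sq_abs]; ring
  -- integrability
  have iT : Integrable (fun ω => (T ω - m) ^ 2) :=
    (hT.sub (memLp_const m)).integrable_sq
  have iX : Integrable (fun ω => (X ω - a) ^ 2) :=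
    (hX.sub (memLp_const a)).integrable_sq
  have iX₁ : Integrable (fun ω => (X₁ ω - b) ^ 2) :=
    (hX₁.sub (memLp_const b)).integrable_sq
  have iX₂ : Integrable (fun ω => (X₂ ω - c) ^ 2) :=
    (hX₂.sub (memLp_const c)).integrable_sq
  have step1 : variance T ℙ ≤ ∫ ω, (T ω - m) ^ 2 := by
    have hexp : ∫ ω, (T ω - m) ^ 2 = (∫ ω, T ω ^ 2) - 2 * m * (∫ ω, T ω) + m ^ 2 := by
      have : ∀ ω, (T ω - m) ^ 2 = T ω ^ 2 - 2 * m * T ω + m ^ 2 := fun ω => by ring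
      simp_rw [this]
      have i1 : Integrable (fun ω => T ω ^ 2) := hT.integrable_sq
      have i2 : Integrable (fun ω => 2 * m * T ω) := (hT.integrable one_le_two).const_mul _
      have i3 : Integrable (fun ω => T ω ^ 2 - 2 * m * T ω) := i1.sub i2
      rw [integral_add i3 (integrable_const _), integral_sub i1 i2,
        MeasureTheory.integral_const_mul, integral_const]
      simp [measure_univ]
    have hvar : variance T ℙ = (∫ ω, T ω ^ 2) - (∫ ω, T ω) ^ 2 := by
      rw [variance_eq_sub hT]; rfl
    rw [hvar, hexp]
    nlinarith [sq_nonneg ((∫ ω, T ω) - m)]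
  have step2 : ∫ ω, (T ω - m) ^ 2 ≤
      ∫ ω, ((X ω - a) ^ 2 + (X₁ ω - b) ^ 2 + (X₂ ω - c) ^ 2) :=
    integral_mono iT ((iX.add iX₁).add iX₂) key
  have step3 : ∫ ω, ((X ω - a) ^ 2 + (X₁ ω - b) ^ 2 + (X₂ ω - c) ^ 2) =
      variance X ℙ + variance X₁ ℙ + variance X₂ ℙ := by
    have iXX : Integrable (fun ω => (X ω - a) ^ 2 + (X₁ ω - b) ^ 2) := iX.add iX₁
    rw [integral_add iXX iX₂, integral_add iX iX₁,
      variance_eq_integral hX.aemeasurable, variance_eq_integral hX₁.aemeasurable,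
      variance_eq_integral hX₂.aemeasurable]
  calc variance T ℙ ≤ ∫ ω, (T ω - m) ^ 2 := step1
    _ ≤ _ := step2
    _ = _ := step3
end

section
/- Let X, X₁ and X₂ be real-valued random variables on a probability space with finite second moments, and define X(X₁,X₂) := min(X₂, max(X, X₁)). Then Var(X(X₁,X₂)) = Var(X) + Var(X₁) + Var(X₂) if and only if there exist real constants c₁ and c₂ such that one of the following four conditions holds almost surely: (1) X₂ = c₂, X₁ = c₁ and c₁ ≤ X ≤ c₂; (2) X = c₂, X₁ = c₁, c₂ ≥ c₁ and X₂ ≤ c₂; (3) X₂ = c₂, X = c₁ and c₁ ≤ X₁ ≤ c₂; (4) X₁ = c₂, X = c₁, c₂ ≥ c₁ and X₂ ≤ c₂. -/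
open MeasureTheory ProbabilityTheory Filter
open scoped ENNReal

namespace VarTrunc

section RealLemmas

lemma abs_sq_le {u v : ℝ} (h : |u| ≤ |v|) : u ^ 2 ≤ v ^ 2 := by
  rw [← sq_abs u, ← sq_abs v]
  exact pow_le_pow_left₀ (abs_nonneg u) h 2

lemma trunc_abs_le (a a₁ a₂ b b₁ b₂ : ℝ) :
    |min a₂ (max a a₁) - min b₂ (max b b₁)| ≤ |a - b| ∨
    |min a₂ (max a a₁) - min b₂ (max b b₁)| ≤ |a₁ - b₁| ∨
    |min a₂ (max a a₁) - min b₂ (max b b₁)| ≤ |a₂ - b₂| := by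
  have h1 : |min a₂ (max a a₁) - min b₂ (max b b₁)| ≤ max |a₂ - b₂| (max |a - b| |a₁ - b₁|) :=
    (abs_min_sub_min_le_max _ _ _ _).trans
      (max_le_max le_rfl (abs_max_sub_max_le_max _ _ _ _))
  rcases max_cases |a₂ - b₂| (max |a - b| |a₁ - b₁|) with ⟨he, _⟩ | ⟨he, _⟩ <;> rw [he] at h1
  · exact Or.inr (Or.inr h1)
  · rcases max_cases |a - b| |a₁ - b₁| with ⟨he2, _⟩ | ⟨he2, _⟩ <;> rw [he2] at h1
    · exact Or.inl h1
    · exact Or.inr (Or.inl h1)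

lemma trunc_sq_le (a a₁ a₂ b b₁ b₂ : ℝ) :
    (min a₂ (max a a₁) - min b₂ (max b b₁)) ^ 2 ≤ (a - b) ^ 2 + (a₁ - b₁) ^ 2 + (a₂ - b₂) ^ 2 := by
  rcases trunc_abs_le a a₁ a₂ b b₁ b₂ with h | h | h <;>
    nlinarith [abs_sq_le h, sq_nonneg (a - b), sq_nonneg (a₁ - b₁), sq_nonneg (a₂ - b₂)]

lemma sq_eq_zero_eq {u v : ℝ} (h : (u - v) ^ 2 = 0) : u = v := by
  have := pow_eq_zero_iff (n := 2) two_ne_zero |>.1 h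
  linarith [sub_eq_zero.1 this]

lemma trunc_sq_eq_cases {a a₁ a₂ b b₁ b₂ : ℝ}
    (h : (min a₂ (max a a₁) - min b₂ (max b b₁)) ^ 2
      = (a - b) ^ 2 + (a₁ - b₁) ^ 2 + (a₂ - b₂) ^ 2) :
    (a = b ∧ a₁ = b₁) ∨ (a = b ∧ a₂ = b₂) ∨ (a₁ = b₁ ∧ a₂ = b₂) := by
  rcases trunc_abs_le a a₁ a₂ b b₁ b₂ with hle | hle | hle
  · refine Or.inr (Or.inr ⟨?_, ?_⟩) <;> apply sq_eq_zero_eq <;>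
      nlinarith [abs_sq_le hle, sq_nonneg (a₁ - b₁), sq_nonneg (a₂ - b₂)]
  · refine Or.inr (Or.inl ⟨?_, ?_⟩) <;> apply sq_eq_zero_eq <;>
      nlinarith [abs_sq_le hle, sq_nonneg (a - b), sq_nonneg (a₂ - b₂)]
  · refine Or.inl ⟨?_, ?_⟩ <;> apply sq_eq_zero_eq <;>
      nlinarith [abs_sq_le hle, sq_nonneg (a - b), sq_nonneg (a₁ - b₁)]

lemma clamp_sq_eq_cases (c₁ c₂ x y : ℝ)
    (h : (min c₂ (max x c₁) - min c₂ (max y c₁)) ^ 2 = (x - y) ^ 2) :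
    x = y ∨ (c₁ ≤ x ∧ x ≤ c₂ ∧ c₁ ≤ y ∧ y ≤ c₂) := by
  rcases le_total c₂ c₁ with hc | hc
  · left
    rw [min_eq_left (hc.trans (le_max_right x c₁)),
      min_eq_left (hc.trans (le_max_right y c₁))] at h
    exact sq_eq_zero_eq (by simpa using h.symm)
  · have hval : ∀ t : ℝ, (t ≤ c₁ → min c₂ (max t c₁) = c₁)
        ∧ (c₁ ≤ t → t ≤ c₂ → min c₂ (max t c₁) = t)
        ∧ (c₂ ≤ t → min c₂ (max t c₁) = c₂) := by
      intro t
      refine ⟨fun ht => ?_, fun ht1 ht2 => ?_, fun ht => ?_⟩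
      · rw [max_eq_right ht, min_eq_right hc]
      · rw [max_eq_left ht1, min_eq_right ht2]
      · rw [max_eq_left (hc.trans ht), min_eq_left ht]
    rcases le_total x c₁ with hx1 | hx1
    · rcases le_total y c₁ with hy1 | hy1
      · rw [(hval x).1 hx1, (hval y).1 hy1] at h
        exact Or.inl (sq_eq_zero_eq (by simpa using h.symm))
      · rcases le_total y c₂ with hy2 | hy2
        · rw [(hval x).1 hx1, (hval y).2.1 hy1 hy2] at h
          have hx : c₁ ≤ x := by nlinarith [h]
          exact Or.inr ⟨hx, le_trans hx1 hc, hy1, hy2⟩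
        · rw [(hval x).1 hx1, (hval y).2.2 hy2] at h
          have hx : c₁ ≤ x := by nlinarith [h]
          have hy : y ≤ c₂ := by nlinarith [h]
          exact Or.inr ⟨hx, le_trans hx1 hc, hc.trans hy2, hy⟩
    · rcases le_total x c₂ with hx2 | hx2
      · rcases le_total y c₁ with hy1 | hy1
        · rw [(hval x).2.1 hx1 hx2, (hval y).1 hy1] at h
          have hy : c₁ ≤ y := by nlinarith [h]
          exact Or.inr ⟨hx1, hx2, hy, le_trans hy1 hc⟩
        · rcases le_total y c₂ with hy2 | hy2
          · exact Or.inr ⟨hx1, hx2, hy1, hy2⟩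
          · rw [(hval x).2.1 hx1 hx2, (hval y).2.2 hy2] at h
            have hy : y ≤ c₂ := by nlinarith [h]
            exact Or.inr ⟨hx1, hx2, hy1, hy⟩
      · rcases le_total y c₁ with hy1 | hy1
        · rw [(hval x).2.2 hx2, (hval y).1 hy1] at h
          have hx : x ≤ c₂ := by nlinarith [h]
          have hy : c₁ ≤ y := by nlinarith [h]
          exact Or.inr ⟨hc.trans hx2, hx, hy, hy1.trans hc⟩
        · rcases le_total y c₂ with hy2 | hy2
          · rw [(hval x).2.2 hx2, (hval y).2.1 hy1 hy2] at h
            have hx : x ≤ c₂ := by nlinarith [h]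
            exact Or.inr ⟨hc.trans hx2, hx, hy1, hy2⟩
          · rw [(hval x).2.2 hx2, (hval y).2.2 hy2] at h
            exact Or.inl (sq_eq_zero_eq (by simpa using h.symm))

lemma min_sq_eq_cases (m x y : ℝ) (h : (min x m - min y m) ^ 2 = (x - y) ^ 2) :
    x = y ∨ (x ≤ m ∧ y ≤ m) := by
  rcases le_total x m with hx | hx <;> rcases le_total y m with hy | hy
  · exact Or.inr ⟨hx, hy⟩
  · rw [min_eq_left hx, min_eq_right hy] at h
    exact Or.inr ⟨hx, by nlinarith [h, sq_nonneg (y - m)]⟩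
  · rw [min_eq_right hx, min_eq_left hy] at h
    exact Or.inr ⟨by nlinarith [h, sq_nonneg (x - m)], hy⟩
  · rw [min_eq_right hx, min_eq_right hy] at h
    exact Or.inl (sq_eq_zero_eq (by simpa using h.symm))

end RealLemmas

variable {Ω : Type*} [MeasureSpace Ω] [IsProbabilityMeasure (ℙ : Measure Ω)]

lemma mp_fst : MeasurePreserving (Prod.fst : Ω × Ω → Ω) ((ℙ : Measure Ω).prod (ℙ : Measure Ω)) ℙ :=
  ⟨measurable_fst, by simp⟩

lemma mp_snd : MeasurePreserving (Prod.snd : Ω × Ω → Ω) ((ℙ : Measure Ω).prod (ℙ : Measure Ω)) ℙ :=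
  ⟨measurable_snd, by simp⟩

lemma integral_comp_fst (g : Ω → ℝ) (hg : AEStronglyMeasurable g ℙ) :
    ∫ p, g p.1 ∂((ℙ : Measure Ω).prod (ℙ : Measure Ω)) = ∫ ω, g ω ∂ℙ := by
  have h := (integral_map (μ := (ℙ : Measure Ω).prod (ℙ : Measure Ω)) (φ := Prod.fst)
    measurable_fst.aemeasurable (f := g) (by rw [mp_fst.map_eq]; exact hg)).symm
  rw [h, mp_fst.map_eq]

lemma integral_comp_snd (g : Ω → ℝ) (hg : AEStronglyMeasurable g ℙ) :
    ∫ p, g p.2 ∂((ℙ : Measure Ω).prod (ℙ : Measure Ω)) = ∫ ω, g ω ∂ℙ := by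
  have h := (integral_map (μ := (ℙ : Measure Ω).prod (ℙ : Measure Ω)) (φ := Prod.snd)
    measurable_snd.aemeasurable (f := g) (by rw [mp_snd.map_eq]; exact hg)).symm
  rw [h, mp_snd.map_eq]

lemma pair_sq_integrable {U : Ω → ℝ} (hU : MemLp U 2) :
    Integrable (fun p : Ω × Ω => (U p.1 - U p.2) ^ 2) ((ℙ : Measure Ω).prod (ℙ : Measure Ω)) := by
  have h1 : MemLp (fun p : Ω × Ω => U p.1) 2 ((ℙ : Measure Ω).prod (ℙ : Measure Ω)) :=
    hU.comp_measurePreserving mp_fst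
  have h2 : MemLp (fun p : Ω × Ω => U p.2) 2 ((ℙ : Measure Ω).prod (ℙ : Measure Ω)) :=
    hU.comp_measurePreserving mp_snd
  exact (h1.sub h2).integrable_sq

lemma integral_pair_sq {U : Ω → ℝ} (hU : MemLp U 2) :
    ∫ p, (U p.1 - U p.2) ^ 2 ∂((ℙ : Measure Ω).prod (ℙ : Measure Ω)) = 2 * variance U ℙ := by
  have h1 : MemLp (fun p : Ω × Ω => U p.1) 2 ((ℙ : Measure Ω).prod (ℙ : Measure Ω)) :=
    hU.comp_measurePreserving mp_fst
  have h2 : MemLp (fun p : Ω × Ω => U p.2) 2 ((ℙ : Measure Ω).prod (ℙ : Measure Ω)) :=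
    hU.comp_measurePreserving mp_snd
  have i1 : Integrable (fun p : Ω × Ω => U p.1 ^ 2) ((ℙ : Measure Ω).prod (ℙ : Measure Ω)) := h1.integrable_sq
  have i2 : Integrable (fun p : Ω × Ω => U p.2 ^ 2) ((ℙ : Measure Ω).prod (ℙ : Measure Ω)) := h2.integrable_sq
  have i3 : Integrable (fun p : Ω × Ω => U p.1 * U p.2) ((ℙ : Measure Ω).prod (ℙ : Measure Ω)) := by
    have h12 : (1 : ℝ≥0∞) / 1 = 1 / 2 + 1 / 2 := by
      rw [ENNReal.div_add_div_same, div_one, one_add_one_eq_two,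
        ENNReal.div_self two_ne_zero ENNReal.ofNat_ne_top]
    have := h2.smul (φ := fun p : Ω × Ω => U p.1) (r := 1) h1
    rw [← memLp_one_iff_integrable]
    exact this
  have expand : ∀ p : Ω × Ω, (U p.1 - U p.2) ^ 2
      = U p.1 ^ 2 - 2 * (U p.1 * U p.2) + U p.2 ^ 2 := fun p => by ring
  have i4 : Integrable (fun p : Ω × Ω => 2 * (U p.1 * U p.2)) ((ℙ : Measure Ω).prod (ℙ : Measure Ω)) :=
    i3.const_mul 2
  have i5 : Integrable (fun p : Ω × Ω => U p.1 ^ 2 - 2 * (U p.1 * U p.2))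
      ((ℙ : Measure Ω).prod (ℙ : Measure Ω)) := i1.sub i4
  simp_rw [expand]
  rw [integral_add i5 i2, integral_sub i1 i4,
    integral_const_mul, integral_prod_mul U U,
    integral_comp_fst _ hU.integrable_sq.aestronglyMeasurable,
    integral_comp_snd _ hU.integrable_sq.aestronglyMeasurable,
    variance_eq_sub hU]
  have : (ℙ : Measure Ω)[U ^ 2] = ∫ ω, U ω ^ 2 ∂ℙ := rfl
  rw [this]
  ring


lemma variance_congr' {U V : Ω → ℝ} (h : U =ᵐ[ℙ] V) : variance U ℙ = variance V ℙ := by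
  have hm : (ℙ : Measure Ω)[U] = (ℙ : Measure Ω)[V] := integral_congr_ae h
  simp only [ProbabilityTheory.variance, ProbabilityTheory.evariance, hm]
  congr 1
  apply lintegral_congr_ae
  filter_upwards [h] with ω hω
  rw [hω]

lemma variance_ae_const {U : Ω → ℝ} {c : ℝ} (h : U =ᵐ[ℙ] fun _ => c) : variance U ℙ = 0 := by
  rw [variance_congr' h, variance_eq_sub (memLp_const c)]
  simp [Pi.pow_apply]

lemma ae_eq_of_integral_eq' {α : Type*} {m : MeasurableSpace α} {μ : Measure α} {f g : α → ℝ}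
    (hle : ∀ᵐ x ∂μ, f x ≤ g x) (hf : Integrable f μ) (hg : Integrable g μ)
    (h : ∫ x, f x ∂μ = ∫ x, g x ∂μ) : ∀ᵐ x ∂μ, f x = g x := by
  have h0 : ∫ x, (g x - f x) ∂μ = 0 := by rw [integral_sub hg hf, h, sub_self]
  have h1 : (fun x => g x - f x) =ᵐ[μ] 0 := by
    refine (integral_eq_zero_iff_of_nonneg_ae ?_ (hg.sub hf)).1 h0
    filter_upwards [hle] with x hx
    simpa using hx
  filter_upwards [h1] with x hx
  have : g x - f x = 0 := hx
  linarith

lemma exists_ae_const {U V : Ω → ℝ}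
    (h : ∀ᵐ p ∂((ℙ : Measure Ω).prod (ℙ : Measure Ω)), U p.1 = U p.2 ∨ V p.1 = V p.2)
    (hnc : ¬ ∃ c, U =ᵐ[ℙ] fun _ => c) : ∃ c, V =ᵐ[ℙ] fun _ => c := by
  haveI : (ae (ℙ : Measure Ω)).NeBot := ae_neBot.2 (IsProbabilityMeasure.ne_zero _)
  have h' : ∀ᵐ ω₁ ∂(ℙ : Measure Ω), ∀ᵐ ω₂ ∂(ℙ : Measure Ω),
      U ω₁ = U ω₂ ∨ V ω₁ = V ω₂ := Measure.ae_ae_of_ae_prod h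
  obtain ⟨ω₀, hω₀⟩ := h'.exists
  have hfr : ∃ᶠ ω in ae (ℙ : Measure Ω), ¬ (U ω = U ω₀) :=
    Filter.not_eventually.1 (fun hev => hnc ⟨U ω₀, hev⟩)
  obtain ⟨ω₁, hne, hω₁, hd⟩ := (hfr.and_eventually (h'.and hω₀)).exists
  have hV1 : V ω₀ = V ω₁ := by
    rcases hd with hd | hd
    · exact absurd hd.symm hne
    · exact hd
  refine ⟨V ω₀, ?_⟩
  filter_upwards [hω₀, hω₁] with ω h0 h1
  rcases h0 with h0 | h0
  · rcases h1 with h1 | h1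
    · exact absurd (h1.trans h0.symm) hne
    · show V ω = V ω₀
      rw [← h1, ← hV1]
  · exact h0.symm

lemma ae_of_pick {U : Ω → ℝ} {q : Ω → Prop}
    (h : ∀ᵐ p ∂((ℙ : Measure Ω).prod (ℙ : Measure Ω)), U p.1 = U p.2 ∨ (q p.1 ∧ q p.2))
    (hnc : ¬ ∃ c, U =ᵐ[ℙ] fun _ => c) : ∀ᵐ ω ∂(ℙ : Measure Ω), q ω := by
  haveI : (ae (ℙ : Measure Ω)).NeBot := ae_neBot.2 (IsProbabilityMeasure.ne_zero _)
  have h' : ∀ᵐ ω₁ ∂(ℙ : Measure Ω), ∀ᵐ ω₂ ∂(ℙ : Measure Ω),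
      U ω₁ = U ω₂ ∨ (q ω₁ ∧ q ω₂) := Measure.ae_ae_of_ae_prod h
  by_contra hq
  have hfr : ∃ᶠ ω in ae (ℙ : Measure Ω), ¬ q ω := Filter.not_eventually.1 hq
  obtain ⟨ω₀, hq0, h0⟩ := (hfr.and_eventually h').exists
  refine hnc ⟨U ω₀, ?_⟩
  filter_upwards [h0] with ω hω
  rcases hω with hω | hω
  · exact hω.symm
  · exact absurd hω.1 hq0

end VarTrunc

open VarTrunc in
/-- For real random variables `X, X₁, X₂` with finite second moments,
`Var(min(X₂, max(X, X₁))) = Var(X) + Var(X₁) + Var(X₂)` iff there exist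
constants `c₁, c₂` such that one of the four conditions of
Theorem `var-eqt2` holds almost surely. -/
theorem variance_truncation_eq_iff {Ω : Type*} [MeasureSpace Ω]
    [IsProbabilityMeasure (ℙ : Measure Ω)]
    (X X₁ X₂ : Ω → ℝ) (hX : MemLp X 2) (hX₁ : MemLp X₁ 2) (hX₂ : MemLp X₂ 2) :
    variance (fun ω => min (X₂ ω) (max (X ω) (X₁ ω))) ℙ =
      variance X ℙ + variance X₁ ℙ + variance X₂ ℙ ↔
    ∃ c₁ c₂ : ℝ,
      (∀ᵐ ω, X₂ ω = c₂ ∧ X₁ ω = c₁ ∧ c₁ ≤ X ω ∧ X ω ≤ c₂) ∨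
      (∀ᵐ ω, X ω = c₂ ∧ X₁ ω = c₁ ∧ c₁ ≤ c₂ ∧ X₂ ω ≤ c₂) ∨
      (∀ᵐ ω, X₂ ω = c₂ ∧ X ω = c₁ ∧ c₁ ≤ X₁ ω ∧ X₁ ω ≤ c₂) ∨
      (∀ᵐ ω, X₁ ω = c₂ ∧ X ω = c₁ ∧ c₁ ≤ c₂ ∧ X₂ ω ≤ c₂) := by
  constructor
  · intro h
    -- Mem ℒ² of the truncation
    have hT : MemLp (fun ω => min (X₂ ω) (max (X ω) (X₁ ω))) 2 ℙ := by
      have h1 := hX₂.inf (hX.sup hX₁)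
      have he : X₂ ⊓ (X ⊔ X₁) = fun ω => min (X₂ ω) (max (X ω) (X₁ ω)) := by
        funext ω
        simp [Pi.inf_apply, Pi.sup_apply]
      rwa [he] at h1
    have iT : Integrable (fun p : Ω × Ω =>
        (min (X₂ p.1) (max (X p.1) (X₁ p.1)) - min (X₂ p.2) (max (X p.2) (X₁ p.2))) ^ 2)
        ((ℙ : Measure Ω).prod (ℙ : Measure Ω)) := pair_sq_integrable hT
    have iX : Integrable (fun p : Ω × Ω => (X p.1 - X p.2) ^ 2)
        ((ℙ : Measure Ω).prod (ℙ : Measure Ω)) := pair_sq_integrable hX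
    have iX₁ : Integrable (fun p : Ω × Ω => (X₁ p.1 - X₁ p.2) ^ 2)
        ((ℙ : Measure Ω).prod (ℙ : Measure Ω)) := pair_sq_integrable hX₁
    have iX₂ : Integrable (fun p : Ω × Ω => (X₂ p.1 - X₂ p.2) ^ 2)
        ((ℙ : Measure Ω).prod (ℙ : Measure Ω)) := pair_sq_integrable hX₂
    have iS1 : Integrable (fun p : Ω × Ω => (X p.1 - X p.2) ^ 2 + (X₁ p.1 - X₁ p.2) ^ 2)
        ((ℙ : Measure Ω).prod (ℙ : Measure Ω)) := iX.add iX₁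
    have iS : Integrable (fun p : Ω × Ω =>
        (X p.1 - X p.2) ^ 2 + (X₁ p.1 - X₁ p.2) ^ 2 + (X₂ p.1 - X₂ p.2) ^ 2)
        ((ℙ : Measure Ω).prod (ℙ : Measure Ω)) := iS1.add iX₂
    have e0 : ∫ p, (min (X₂ p.1) (max (X p.1) (X₁ p.1))
          - min (X₂ p.2) (max (X p.2) (X₁ p.2))) ^ 2 ∂((ℙ : Measure Ω).prod (ℙ : Measure Ω))
        = 2 * variance (fun ω => min (X₂ ω) (max (X ω) (X₁ ω))) ℙ := integral_pair_sq hT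
    have hIE : ∫ p, (min (X₂ p.1) (max (X p.1) (X₁ p.1))
          - min (X₂ p.2) (max (X p.2) (X₁ p.2))) ^ 2 ∂((ℙ : Measure Ω).prod (ℙ : Measure Ω))
        = ∫ p, ((X p.1 - X p.2) ^ 2 + (X₁ p.1 - X₁ p.2) ^ 2 + (X₂ p.1 - X₂ p.2) ^ 2)
            ∂((ℙ : Measure Ω).prod (ℙ : Measure Ω)) := by
      rw [e0, integral_add iS1 iX₂, integral_add iX iX₁, integral_pair_sq hX,
        integral_pair_sq hX₁, integral_pair_sq hX₂, h]
      ring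
    have key : ∀ᵐ p ∂((ℙ : Measure Ω).prod (ℙ : Measure Ω)),
        (min (X₂ p.1) (max (X p.1) (X₁ p.1)) - min (X₂ p.2) (max (X p.2) (X₁ p.2))) ^ 2
          = (X p.1 - X p.2) ^ 2 + (X₁ p.1 - X₁ p.2) ^ 2 + (X₂ p.1 - X₂ p.2) ^ 2 :=
      ae_eq_of_integral_eq'
        (Filter.Eventually.of_forall fun p => trunc_sq_le _ _ _ _ _ _) iT iS hIE
    have htwo : ∀ᵐ p ∂((ℙ : Measure Ω).prod (ℙ : Measure Ω)),
        (X p.1 = X p.2 ∧ X₁ p.1 = X₁ p.2) ∨ (X p.1 = X p.2 ∧ X₂ p.1 = X₂ p.2)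
          ∨ (X₁ p.1 = X₁ p.2 ∧ X₂ p.1 = X₂ p.2) := by
      filter_upwards [key] with p hp
      exact trunc_sq_eq_cases hp
    rcases Classical.em (∃ c, X =ᵐ[ℙ] fun _ => c) with hcX | hcX
    · obtain ⟨c, hcc⟩ := hcX
      have lc : ∀ᵐ p ∂((ℙ : Measure Ω).prod (ℙ : Measure Ω)), X p.1 = c :=
        mp_fst.quasiMeasurePreserving.tendsto_ae.eventually hcc
      have lc' : ∀ᵐ p ∂((ℙ : Measure Ω).prod (ℙ : Measure Ω)), X p.2 = c :=
        mp_snd.quasiMeasurePreserving.tendsto_ae.eventually hcc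
      rcases Classical.em (∃ c', X₁ =ᵐ[ℙ] fun _ => c') with hcX₁ | hcX₁
      · obtain ⟨c₁, hcc₁⟩ := hcX₁
        have lc₁ : ∀ᵐ p ∂((ℙ : Measure Ω).prod (ℙ : Measure Ω)), X₁ p.1 = c₁ :=
          mp_fst.quasiMeasurePreserving.tendsto_ae.eventually hcc₁
        have lc₁' : ∀ᵐ p ∂((ℙ : Measure Ω).prod (ℙ : Measure Ω)), X₁ p.2 = c₁ :=
          mp_snd.quasiMeasurePreserving.tendsto_ae.eventually hcc₁
        rcases Classical.em (∃ c'', X₂ =ᵐ[ℙ] fun _ => c'') with hcX₂ | hcX₂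
        · -- all three a.e. constant
          obtain ⟨c₂0, hcc₂⟩ := hcX₂
          rcases le_total c₁ c with h1 | h1
          · rcases le_total c c₂0 with h2 | h2
            · refine ⟨c₁, c₂0, Or.inl ?_⟩
              filter_upwards [hcc, hcc₁, hcc₂] with ω e e1 e2
              exact ⟨e2, e1, by rw [e]; exact h1, by rw [e]; exact h2⟩
            · refine ⟨c₁, c, Or.inr (Or.inl ?_)⟩
              filter_upwards [hcc, hcc₁, hcc₂] with ω e e1 e2
              exact ⟨e, e1, h1, by rw [e2]; exact h2⟩
          · rcases le_total c₁ c₂0 with h2 | h2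
            · refine ⟨c, c₂0, Or.inr (Or.inr (Or.inl ?_))⟩
              filter_upwards [hcc, hcc₁, hcc₂] with ω e e1 e2
              exact ⟨e2, e, by rw [e1]; exact h1, by rw [e1]; exact h2⟩
            · refine ⟨c, c₁, Or.inr (Or.inr (Or.inr ?_))⟩
              filter_upwards [hcc, hcc₁, hcc₂] with ω e e1 e2
              exact ⟨e1, e, h1, by rw [e2]; exact h2⟩
        · -- X₂ not a.e. constant, X = c, X₁ = c₁
          have key2 : ∀ᵐ p ∂((ℙ : Measure Ω).prod (ℙ : Measure Ω)),
              (min (X₂ p.1) (max c c₁) - min (X₂ p.2) (max c c₁)) ^ 2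
                = (X₂ p.1 - X₂ p.2) ^ 2 := by
            filter_upwards [key, lc, lc', lc₁, lc₁'] with p hk e1 e2 e3 e4
            rw [e1, e2, e3, e4] at hk
            simpa using hk
          have key3 : ∀ᵐ p ∂((ℙ : Measure Ω).prod (ℙ : Measure Ω)),
              X₂ p.1 = X₂ p.2 ∨ (X₂ p.1 ≤ max c c₁ ∧ X₂ p.2 ≤ max c c₁) := by
            filter_upwards [key2] with p hp
            exact min_sq_eq_cases _ _ _ hp
          have hbound := ae_of_pick (q := fun ω => X₂ ω ≤ max c c₁) key3 hcX₂
          rcases le_total c₁ c with h1 | h1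
          · refine ⟨c₁, c, Or.inr (Or.inl ?_)⟩
            filter_upwards [hcc, hcc₁, hbound] with ω e e1 hb
            exact ⟨e, e1, h1, by rwa [max_eq_left h1] at hb⟩
          · refine ⟨c, c₁, Or.inr (Or.inr (Or.inr ?_))⟩
            filter_upwards [hcc, hcc₁, hbound] with ω e e1 hb
            exact ⟨e1, e, h1, by rwa [max_eq_right h1] at hb⟩
      · -- X₁ not a.e. constant, X = c
        have hpair : ∀ᵐ p ∂((ℙ : Measure Ω).prod (ℙ : Measure Ω)),
            X₁ p.1 = X₁ p.2 ∨ X₂ p.1 = X₂ p.2 := by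
          filter_upwards [htwo] with p hp
          rcases hp with h' | h' | h'
          · exact Or.inl h'.2
          · exact Or.inr h'.2
          · exact Or.inl h'.1
        obtain ⟨c₂, hc2⟩ := exists_ae_const hpair hcX₁
        have lc₂ : ∀ᵐ p ∂((ℙ : Measure Ω).prod (ℙ : Measure Ω)), X₂ p.1 = c₂ :=
          mp_fst.quasiMeasurePreserving.tendsto_ae.eventually hc2
        have lc₂' : ∀ᵐ p ∂((ℙ : Measure Ω).prod (ℙ : Measure Ω)), X₂ p.2 = c₂ :=
          mp_snd.quasiMeasurePreserving.tendsto_ae.eventually hc2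
        have key2 : ∀ᵐ p ∂((ℙ : Measure Ω).prod (ℙ : Measure Ω)),
            (min c₂ (max (X₁ p.1) c) - min c₂ (max (X₁ p.2) c)) ^ 2
              = (X₁ p.1 - X₁ p.2) ^ 2 := by
          filter_upwards [key, lc, lc', lc₂, lc₂'] with p hk e1 e2 e3 e4
          rw [e1, e2, e3, e4, max_comm c (X₁ p.1), max_comm c (X₁ p.2)] at hk
          simpa using hk
        have key3 : ∀ᵐ p ∂((ℙ : Measure Ω).prod (ℙ : Measure Ω)),
            X₁ p.1 = X₁ p.2 ∨ ((c ≤ X₁ p.1 ∧ X₁ p.1 ≤ c₂) ∧ (c ≤ X₁ p.2 ∧ X₁ p.2 ≤ c₂)) := by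
          filter_upwards [key2] with p hp
          rcases clamp_sq_eq_cases c c₂ _ _ hp with h' | h'
          · exact Or.inl h'
          · exact Or.inr ⟨⟨h'.1, h'.2.1⟩, h'.2.2⟩
        have hbox := ae_of_pick (q := fun ω => c ≤ X₁ ω ∧ X₁ ω ≤ c₂) key3 hcX₁
        refine ⟨c, c₂, Or.inr (Or.inr (Or.inl ?_))⟩
        filter_upwards [hc2, hcc, hbox] with ω h2 h0 hb
        exact ⟨h2, h0, hb.1, hb.2⟩
    · -- X not a.e. constant
      have hpair1 : ∀ᵐ p ∂((ℙ : Measure Ω).prod (ℙ : Measure Ω)),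
          X p.1 = X p.2 ∨ X₁ p.1 = X₁ p.2 := by
        filter_upwards [htwo] with p hp
        rcases hp with h' | h' | h'
        · exact Or.inl h'.1
        · exact Or.inl h'.1
        · exact Or.inr h'.1
      have hpair2 : ∀ᵐ p ∂((ℙ : Measure Ω).prod (ℙ : Measure Ω)),
          X p.1 = X p.2 ∨ X₂ p.1 = X₂ p.2 := by
        filter_upwards [htwo] with p hp
        rcases hp with h' | h' | h'
        · exact Or.inl h'.1
        · exact Or.inl h'.1
        · exact Or.inr h'.2
      obtain ⟨c₁, hc1⟩ := exists_ae_const hpair1 hcX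
      obtain ⟨c₂, hc2⟩ := exists_ae_const hpair2 hcX
      have lc₁ : ∀ᵐ p ∂((ℙ : Measure Ω).prod (ℙ : Measure Ω)), X₁ p.1 = c₁ :=
        mp_fst.quasiMeasurePreserving.tendsto_ae.eventually hc1
      have lc₁' : ∀ᵐ p ∂((ℙ : Measure Ω).prod (ℙ : Measure Ω)), X₁ p.2 = c₁ :=
        mp_snd.quasiMeasurePreserving.tendsto_ae.eventually hc1
      have lc₂ : ∀ᵐ p ∂((ℙ : Measure Ω).prod (ℙ : Measure Ω)), X₂ p.1 = c₂ :=
        mp_fst.quasiMeasurePreserving.tendsto_ae.eventually hc2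
      have lc₂' : ∀ᵐ p ∂((ℙ : Measure Ω).prod (ℙ : Measure Ω)), X₂ p.2 = c₂ :=
        mp_snd.quasiMeasurePreserving.tendsto_ae.eventually hc2
      have key2 : ∀ᵐ p ∂((ℙ : Measure Ω).prod (ℙ : Measure Ω)),
          (min c₂ (max (X p.1) c₁) - min c₂ (max (X p.2) c₁)) ^ 2
            = (X p.1 - X p.2) ^ 2 := by
        filter_upwards [key, lc₁, lc₁', lc₂, lc₂'] with p hk e1 e2 e3 e4
        rw [e1, e2, e3, e4] at hk
        simpa using hk
      have key3 : ∀ᵐ p ∂((ℙ : Measure Ω).prod (ℙ : Measure Ω)),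
          X p.1 = X p.2 ∨ ((c₁ ≤ X p.1 ∧ X p.1 ≤ c₂) ∧ (c₁ ≤ X p.2 ∧ X p.2 ≤ c₂)) := by
        filter_upwards [key2] with p hp
        rcases clamp_sq_eq_cases c₁ c₂ _ _ hp with h' | h'
        · exact Or.inl h'
        · exact Or.inr ⟨⟨h'.1, h'.2.1⟩, h'.2.2⟩
      have hbox := ae_of_pick (q := fun ω => c₁ ≤ X ω ∧ X ω ≤ c₂) key3 hcX
      refine ⟨c₁, c₂, Or.inl ?_⟩
      filter_upwards [hc2, hc1, hbox] with ω h2 h1 hb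
      exact ⟨h2, h1, hb.1, hb.2⟩
  · rintro ⟨c₁, c₂, hcase | hcase | hcase | hcase⟩
    · have hTX : (fun ω => min (X₂ ω) (max (X ω) (X₁ ω))) =ᵐ[ℙ] X := by
        filter_upwards [hcase] with ω hω
        obtain ⟨h2, h1, hl, hr⟩ := hω
        rw [h2, h1, max_eq_left hl, min_eq_right hr]
      have hV1 : variance X₁ ℙ = 0 :=
        variance_ae_const (by filter_upwards [hcase] with ω hω; exact hω.2.1)
      have hV2 : variance X₂ ℙ = 0 :=
        variance_ae_const (by filter_upwards [hcase] with ω hω; exact hω.1)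
      rw [variance_congr' hTX, hV1, hV2]
      ring
    · have hTX : (fun ω => min (X₂ ω) (max (X ω) (X₁ ω))) =ᵐ[ℙ] X₂ := by
        filter_upwards [hcase] with ω hω
        obtain ⟨h0, h1, hl, hr⟩ := hω
        rw [h0, h1, max_eq_left hl, min_eq_left hr]
      have hV0 : variance X ℙ = 0 :=
        variance_ae_const (by filter_upwards [hcase] with ω hω; exact hω.1)
      have hV1 : variance X₁ ℙ = 0 :=
        variance_ae_const (by filter_upwards [hcase] with ω hω; exact hω.2.1)
      rw [variance_congr' hTX, hV0, hV1]
      ring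
    · have hTX : (fun ω => min (X₂ ω) (max (X ω) (X₁ ω))) =ᵐ[ℙ] X₁ := by
        filter_upwards [hcase] with ω hω
        obtain ⟨h2, h0, hl, hr⟩ := hω
        rw [h2, h0, max_eq_right hl, min_eq_right hr]
      have hV0 : variance X ℙ = 0 :=
        variance_ae_const (by filter_upwards [hcase] with ω hω; exact hω.2.1)
      have hV2 : variance X₂ ℙ = 0 :=
        variance_ae_const (by filter_upwards [hcase] with ω hω; exact hω.1)
      rw [variance_congr' hTX, hV0, hV2]
      ring
    · have hTX : (fun ω => min (X₂ ω) (max (X ω) (X₁ ω))) =ᵐ[ℙ] X₂ := by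
        filter_upwards [hcase] with ω hω
        obtain ⟨h1, h0, hl, hr⟩ := hω
        rw [h1, h0, max_eq_right hl, min_eq_left hr]
      have hV0 : variance X ℙ = 0 :=
        variance_ae_const (by filter_upwards [hcase] with ω hω; exact hω.2.1)
      have hV1 : variance X₁ ℙ = 0 :=
        variance_ae_const (by filter_upwards [hcase] with ω hω; exact hω.1)
      rw [variance_congr' hTX, hV0, hV1]
      ring
end

section
/- Let X be a real-valued random variable on a probability space with finite second moment, and for a real number s set Y(s) := min(X, s). Then for all real s₁ ≤ s₂, Var(Y(s₁)) ≤ Var(Y(s₂)); that is, s ↦ Var(min(X, s)) is non-decreasing. -/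
open MeasureTheory ProbabilityTheory

lemma min_sub_min_sq_le (a b s : ℝ) : (min a s - min b s)^2 ≤ (a - b)^2 := by
  rcases le_total a s with h1 | h1 <;> rcases le_total b s with h2 | h2 <;>
    simp [min_eq_left, min_eq_right, h1, h2] <;> nlinarith

lemma variance_le_integral_sub_sq {Ω : Type*} [MeasureSpace Ω]
    [IsProbabilityMeasure (ℙ : Measure Ω)] {U : Ω → ℝ} (hU : MemLp U 2) (c : ℝ) :
    variance U ℙ ≤ ∫ ω, (U ω - c)^2 := by
  have hU1 : Integrable U ℙ := hU.integrable one_le_two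
  have hUsq : Integrable (fun ω => U ω ^ 2) ℙ := hU.integrable_sq
  have hexp : ∫ ω, (U ω - c)^2 = (∫ ω, U ω ^ 2) - 2 * c * (∫ ω, U ω) + c ^ 2 := by
    have : (fun ω => (U ω - c)^2) = fun ω => U ω ^ 2 - 2 * c * U ω + c ^ 2 := by
      funext ω; ring
    have h2 : Integrable (fun ω => U ω ^ 2 - 2 * c * U ω) ℙ := hUsq.sub (hU1.const_mul _)
    rw [this, integral_add h2 (integrable_const _), integral_sub hUsq (hU1.const_mul _),
      integral_const_mul]
    simp
  rw [hexp, variance_eq_sub hU]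
  have : (0:ℝ) ≤ ((∫ ω, U ω) - c)^2 := sq_nonneg _
  simp only [Pi.pow_apply] at *
  nlinarith [sq_nonneg ((∫ ω, U ω) - c)]

lemma variance_min_le {Ω : Type*} [MeasureSpace Ω]
    [IsProbabilityMeasure (ℙ : Measure Ω)] {Z : Ω → ℝ} (hZ : MemLp Z 2) (s : ℝ) :
    variance (fun ω => min (Z ω) s) ℙ ≤ variance Z ℙ := by
  have hY : MemLp (fun ω => min (Z ω) s) 2 := hZ.inf (memLp_const s)
  set m := ∫ ω, Z ω with hm
  calc variance (fun ω => min (Z ω) s) ℙ ≤ ∫ ω, (min (Z ω) s - min m s)^2 :=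
        variance_le_integral_sub_sq hY _
    _ ≤ ∫ ω, (Z ω - m)^2 := by
        apply integral_mono
        · exact ((hY.sub (memLp_const (min m s))).integrable_sq).congr
            (Filter.Eventually.of_forall fun ω => by simp [sq])
        · exact ((hZ.sub (memLp_const m)).integrable_sq).congr
            (Filter.Eventually.of_forall fun ω => by simp [sq])
        · intro ω; exact min_sub_min_sq_le _ _ _
    _ = variance Z ℙ := by
        rw [variance_eq_integral hZ.aemeasurable]

/-- For a real random variable `X` with finite second moment,
`s ↦ Var(min(X, s))` is non-decreasing. -/
theorem variance_min_const_monotone {Ω : Type*} [MeasureSpace Ω]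
    [IsProbabilityMeasure (ℙ : Measure Ω)]
    (X : Ω → ℝ) (hX : MemLp X 2) (s₁ s₂ : ℝ) (hs : s₁ ≤ s₂) :
    variance (fun ω => min (X ω) s₁) ℙ ≤ variance (fun ω => min (X ω) s₂) ℙ := by
  have hY₂ : MemLp (fun ω => min (X ω) s₂) 2 := hX.inf (memLp_const s₂)
  have h := variance_min_le hY₂ s₁
  have heq : (fun ω => min (min (X ω) s₂) s₁) = fun ω => min (X ω) s₁ := by
    funext ω; rw [min_assoc, min_eq_right hs]
  rwa [heq] at h
end

section
/- Let X be a real-valued random variable on a probability space with finite second moment, and for a real number s set Z(s) := max(X, s). Then for all real s₁ ≤ s₂, Var(Z(s₂)) ≤ Var(Z(s₁)); that is, s ↦ Var(max(X, s)) is non-increasing. -/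
open MeasureTheory ProbabilityTheory

lemma variance_le_integral_sq_sub_const {Ω : Type*} [MeasureSpace Ω]
    [IsProbabilityMeasure (ℙ : Measure Ω)] {Z : Ω → ℝ} (hZ : MemLp Z 2) (c : ℝ) :
    variance Z ℙ ≤ ∫ ω, (Z ω - c) ^ 2 := by
  have hsq : Integrable (fun ω => Z ω ^ 2) ℙ := hZ.integrable_sq
  have hint : Integrable Z ℙ := hZ.integrable one_le_two
  have h2 : ∫ ω, (Z ω - c) ^ 2 = (∫ ω, Z ω ^ 2) - 2 * c * (∫ ω, Z ω) + c ^ 2 := by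
    have : (fun ω => (Z ω - c) ^ 2) = fun ω => Z ω ^ 2 - 2 * c * Z ω + c ^ 2 := by
      funext ω; ring
    have h1 : Integrable (fun ω => Z ω ^ 2 - 2 * c * Z ω) ℙ := hsq.sub (hint.const_mul (2 * c))
    rw [this, integral_add h1 (integrable_const _),
      integral_sub hsq (hint.const_mul (2 * c)), MeasureTheory.integral_const_mul, integral_const]
    simp
  rw [h2, variance_eq_sub hZ]
  have : (∫ ω, Z ω) ^ 2 - (2 * c * ∫ ω, Z ω) + c ^ 2 = ((∫ ω, Z ω) - c) ^ 2 := by ring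
  have hle : 0 ≤ ((∫ ω, Z ω) - c) ^ 2 := sq_nonneg _
  simp only [Pi.pow_apply]
  nlinarith [sq_nonneg ((∫ ω, Z ω) - c)]

/-- For a real random variable `X` with finite second moment,
`s ↦ Var(max (X, s))` is non-increasing. -/
theorem variance_max_const_antitone {Ω : Type*} [MeasureSpace Ω]
    [IsProbabilityMeasure (ℙ : Measure Ω)]
    (X : Ω → ℝ) (hX : MemLp X 2) (s₁ s₂ : ℝ) (hs : s₁ ≤ s₂) :
    variance (fun ω => max (X ω) s₂) ℙ ≤ variance (fun ω => max (X ω) s₁) ℙ := by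
  set Y : Ω → ℝ := fun ω => max (X ω) s₁ with hYdef
  set Z : Ω → ℝ := fun ω => max (X ω) s₂ with hZdef
  have hY : MemLp Y 2 := hX.sup (memLp_const s₁)
  have hZ : MemLp Z 2 := hX.sup (memLp_const s₂)
  set μY : ℝ := ∫ ω, Y ω with hμY
  have key : variance Z ℙ ≤ ∫ ω, (Z ω - max μY s₂) ^ 2 :=
    variance_le_integral_sq_sub_const hZ _
  have hpt : ∀ ω, (Z ω - max μY s₂) ^ 2 ≤ (Y ω - μY) ^ 2 := by
    intro ω
    have hZY : Z ω = max (Y ω) s₂ := by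
      simp only [hZdef, hYdef, max_assoc, max_eq_right hs]
    rw [hZY]
    have habs : |max (Y ω) s₂ - max μY s₂| ≤ |Y ω - μY| := abs_max_sub_max_le_abs _ _ _
    calc (max (Y ω) s₂ - max μY s₂) ^ 2 = |max (Y ω) s₂ - max μY s₂| ^ 2 := (sq_abs _).symm
      _ ≤ |Y ω - μY| ^ 2 := by gcongr
      _ = (Y ω - μY) ^ 2 := sq_abs _
  have hintZ : Integrable (fun ω => (Z ω - max μY s₂) ^ 2) ℙ :=
    (hZ.sub (memLp_const _)).integrable_sq
  have hintY : Integrable (fun ω => (Y ω - μY) ^ 2) ℙ :=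
    (hY.sub (memLp_const _)).integrable_sq
  have hmono : ∫ ω, (Z ω - max μY s₂) ^ 2 ≤ ∫ ω, (Y ω - μY) ^ 2 :=
    integral_mono hintZ hintY hpt
  have hvarY : variance Y ℙ = ∫ ω, (Y ω - μY) ^ 2 := by
    rw [variance_eq_integral hY.aemeasurable]
  calc variance Z ℙ ≤ ∫ ω, (Z ω - max μY s₂) ^ 2 := key
    _ ≤ ∫ ω, (Y ω - μY) ^ 2 := hmono
    _ = variance Y ℙ := hvarY.symm
end
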